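/- Let C be the origin and a, b the position vectors of B and A, spanning a triangle with angle φ at C. Erect equilateral triangles outwardly on the sides CB and CA, with apexes P = a/2 − (√3/2)a⊥ and Q = b/2 + (√3/2)b⊥. Then the lines through A and P, and through B and Q, intersect, and the intersection parameters are τ₀ = (√3 b² + 2ab sin(φ − 60°)) / (√3(a² + b²) − 2√3 ab cos(φ + 60°)) and σ₀ = (√3 a² + 2ab sin(φ − 60°)) / (√3(a² + b²) − 2√3 ab cos(φ + 60°)), where a = ‖a‖, b = ‖b‖, and lines are parametrized as ℓ_AP(τ) = b + τ(P − b) and ℓ_BQ(σ) = a + σ(Q − a). -/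

import Mathlib

/-- Counterclockwise rotation by 90° in the Euclidean plane. -/
noncomputable def perp (v : EuclideanSpace ℝ (Fin 2)) : EuclideanSpace ℝ (Fin 2) :=
  (WithLp.equiv 2 (Fin 2 → ℝ)).symm ![-(v 1), v 0]

theorem lines_AP_BQ_intersection (a b : EuclideanSpace ℝ (Fin 2)) (φ : ℝ)
    (hab : LinearIndependent ℝ ![a, b])
    (hφ0 : 0 < φ) (hφπ : φ < Real.pi)
    (hcos : (inner ℝ a b : ℝ) = ‖a‖ * ‖b‖ * Real.cos φ)
    (hsin : (inner ℝ (perp a) b : ℝ) = ‖a‖ * ‖b‖ * Real.sin φ)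
    (hden : Real.sqrt 3 * (‖a‖ ^ 2 + ‖b‖ ^ 2) -
        2 * Real.sqrt 3 * ‖a‖ * ‖b‖ * Real.cos (φ + Real.pi / 3) ≠ 0) :
    let P := (1 / 2 : ℝ) • a - (Real.sqrt 3 / 2) • perp a
    let Q := (1 / 2 : ℝ) • b + (Real.sqrt 3 / 2) • perp b
    let τ₀ := (Real.sqrt 3 * ‖b‖ ^ 2 + 2 * ‖a‖ * ‖b‖ * Real.sin (φ - Real.pi / 3)) /
      (Real.sqrt 3 * (‖a‖ ^ 2 + ‖b‖ ^ 2) -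
        2 * Real.sqrt 3 * ‖a‖ * ‖b‖ * Real.cos (φ + Real.pi / 3))
    let σ₀ := (Real.sqrt 3 * ‖a‖ ^ 2 + 2 * ‖a‖ * ‖b‖ * Real.sin (φ - Real.pi / 3)) /
      (Real.sqrt 3 * (‖a‖ ^ 2 + ‖b‖ ^ 2) -
        2 * Real.sqrt 3 * ‖a‖ * ‖b‖ * Real.cos (φ + Real.pi / 3))
    b + τ₀ • (P - b) = a + σ₀ • (Q - a) := by
  intro P Q τ₀ σ₀
  set r := Real.sqrt 3 with hr_def
  have hr : r ^ 2 = 3 := Real.sq_sqrt (by norm_num)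
  -- coordinates
  set p := a 0 with hp; set q := a 1 with hq
  set u := b 0 with hu; set v := b 1 with hv
  have hcab : (inner ℝ a b : ℝ) = p * u + q * v := by
    simp [PiLp.inner_apply, Fin.sum_univ_two, hp, hq, hu, hv]
    ring
  have hsab : (inner ℝ (perp a) b : ℝ) = p * v - q * u := by
    simp [perp, PiLp.inner_apply, Fin.sum_univ_two, WithLp.equiv_symm_apply, PiLp.toLp_apply,
      hp, hq, hu, hv]
    ring
  have hA2 : ‖a‖ ^ 2 = p ^ 2 + q ^ 2 := by
    rw [← real_inner_self_eq_norm_sq]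
    simp only [PiLp.inner_apply, Fin.sum_univ_two, RCLike.inner_apply, conj_trivial, hp, hq]
    ring
  have hB2 : ‖b‖ ^ 2 = u ^ 2 + v ^ 2 := by
    rw [← real_inner_self_eq_norm_sq]
    simp only [PiLp.inner_apply, Fin.sum_univ_two, RCLike.inner_apply, conj_trivial, hu, hv]
    ring
  -- trig rewrites
  have hc3 : 2 * r * ‖a‖ * ‖b‖ * Real.cos (φ + Real.pi / 3)
      = r * (p * u + q * v) - 3 * (p * v - q * u) := by
    rw [Real.cos_add, Real.cos_pi_div_three, Real.sin_pi_div_three]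
    have h1 := hcos; rw [hcab] at h1
    have h2 := hsin; rw [hsab] at h2
    have h3 : r * Real.sqrt 3 = 3 := by rw [hr_def]; exact Real.mul_self_sqrt (by norm_num)
    linear_combination (-r) * h1 + 3 * h2 - ‖a‖ * ‖b‖ * Real.sin φ * h3
  have hs3 : 2 * ‖a‖ * ‖b‖ * Real.sin (φ - Real.pi / 3)
      = (p * v - q * u) - r * (p * u + q * v) := by
    rw [Real.sin_sub, Real.cos_pi_div_three, Real.sin_pi_div_three]
    have h1 := hcos; rw [hcab] at h1
    have h2 := hsin; rw [hsab] at h2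
    linear_combination r * h1 - h2 + ‖a‖ * ‖b‖ * Real.cos φ * hr_def
  -- the denominator in coordinate form
  have hDrw : r * (‖a‖ ^ 2 + ‖b‖ ^ 2) - 2 * r * ‖a‖ * ‖b‖ * Real.cos (φ + Real.pi / 3)
      = r * (p ^ 2 + q ^ 2 + u ^ 2 + v ^ 2) - r * (p * u + q * v) + 3 * (p * v - q * u) := by
    rw [hA2, hB2]; linear_combination -hc3
  have hden' : r * (p ^ 2 + q ^ 2 + u ^ 2 + v ^ 2) - r * (p * u + q * v)
      + 3 * (p * v - q * u) ≠ 0 := by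
    rw [← hDrw]; exact hden
  have hτ : τ₀ = (r * (u ^ 2 + v ^ 2) + ((p * v - q * u) - r * (p * u + q * v))) /
      (r * (p ^ 2 + q ^ 2 + u ^ 2 + v ^ 2) - r * (p * u + q * v) + 3 * (p * v - q * u)) := by
    show (r * ‖b‖ ^ 2 + 2 * ‖a‖ * ‖b‖ * Real.sin (φ - Real.pi / 3)) /
      (r * (‖a‖ ^ 2 + ‖b‖ ^ 2) - 2 * r * ‖a‖ * ‖b‖ * Real.cos (φ + Real.pi / 3)) = _
    rw [hDrw, hs3, hB2]
  have hσ : σ₀ = (r * (p ^ 2 + q ^ 2) + ((p * v - q * u) - r * (p * u + q * v))) /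
      (r * (p ^ 2 + q ^ 2 + u ^ 2 + v ^ 2) - r * (p * u + q * v) + 3 * (p * v - q * u)) := by
    show (r * ‖a‖ ^ 2 + 2 * ‖a‖ * ‖b‖ * Real.sin (φ - Real.pi / 3)) /
      (r * (‖a‖ ^ 2 + ‖b‖ ^ 2) - 2 * r * ‖a‖ * ‖b‖ * Real.cos (φ + Real.pi / 3)) = _
    rw [hDrw, hs3, hA2]
  ext i
  fin_cases i <;>
    simp only [P, Q, hτ, hσ, PiLp.add_apply, PiLp.sub_apply, PiLp.smul_apply, smul_eq_mul,
      perp, WithLp.equiv_symm_apply, PiLp.toLp_apply, Matrix.cons_val_zero, Matrix.cons_val_one,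
      Matrix.head_cons, Fin.zero_eta, Fin.mk_one, ← hp, ← hq, ← hu, ← hv, ← hr_def]
  · have hD2 : (r * (p ^ 2 + q ^ 2 + u ^ 2 + v ^ 2 - (u * p + v * q)) + (v * p - u * q) * 3) ≠ 0 := by intro h; apply hden'; linear_combination h
    field_simp
    linear_combination (a 1 * b 0 ^ 2 - a 0 * a 1 * b 0 + a 0 ^ 2 * b 1 - a 0 * b 0 * b 1) * hr
  · have hD2 : (r * (p ^ 2 + q ^ 2 + u ^ 2 + v ^ 2 - (u * p + v * q)) + (v * p - u * q) * 3) ≠ 0 := by intro h; apply hden'; linear_combination h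
    field_simp
    linear_combination (-(a 0 * b 1 ^ 2) + a 0 * a 1 * b 1 - a 1 ^ 2 * b 0 + a 1 * b 0 * b 1) * hr
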